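/- Let L be a positive self-adjoint trace-class operator on a separable Hilbert space with eigenvalues (μ_l) in decreasing order, and let N(λ) = Σ_l μ_l/(μ_l+λ). Suppose μ_l ≤ q l^{-1/γ} for all l ≥ 1, where q > 0 and γ ∈ (0,1). Then for all λ > 0, N(λ) ≤ max{(1+q^γ)/(1-γ), q/(1-γ)} · λ^{-γ}. -/

import Mathlib

open Real Set

lemma step_bound {p a : ℝ} (hp : 1 < p) (ha : 0 < a) :
    (p - 1) * (a + 1) ^ (-p) ≤ a ^ (1 - p) - (a + 1) ^ (1 - p) := by
  have hab : a < a + 1 := by linarith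
  obtain ⟨c, hc, hc'⟩ := exists_hasDerivAt_eq_slope (fun x => x ^ (1 - p))
    (fun x => (1 - p) * x ^ (1 - p - 1)) hab
    (fun x hx => by
      have hx0 : x ≠ 0 := ne_of_gt (lt_of_lt_of_le ha hx.1)
      exact (Real.hasDerivAt_rpow_const (Or.inl hx0)).continuousAt.continuousWithinAt)
    (fun x hx => Real.hasDerivAt_rpow_const (Or.inl (ne_of_gt (lt_trans ha hx.1))))
  have hc0 : 0 < c := lt_trans ha hc.1
  have he : (1 : ℝ) - p - 1 = -p := by ring
  rw [he] at hc'
  have key : (a + 1) ^ (1 - p) - a ^ (1 - p) = (1 - p) * c ^ (-p) := by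
    have h1 : (a + 1) - a = 1 := by ring
    rw [hc', h1, div_one]
  have hmono : (a + 1) ^ (-p) ≤ c ^ (-p) :=
    Real.rpow_le_rpow_of_nonpos hc0 (le_of_lt hc.2) (by linarith)
  nlinarith [hmono, key]

lemma tail_bound {p : ℝ} (hp : 1 < p) (m : ℕ) (hm : 1 ≤ m) :
    ∑' l : ℕ, ((m : ℝ) + l + 1) ^ (-p) ≤ (m : ℝ) ^ (1 - p) / (p - 1) := by
  have hm0 : (0 : ℝ) < m := by exact_mod_cast hm
  have hp1 : (0 : ℝ) < p - 1 := by linarith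
  apply Real.tsum_le_of_sum_range_le
    (fun l => Real.rpow_nonneg (by positivity) _)
  intro n
  rw [le_div_iff₀ hp1]
  calc (∑ l ∈ Finset.range n, ((m : ℝ) + l + 1) ^ (-p)) * (p - 1)
      = ∑ l ∈ Finset.range n, (p - 1) * ((m : ℝ) + l + 1) ^ (-p) := by
        rw [Finset.sum_mul]; congr 1; ext l; ring
    _ ≤ ∑ l ∈ Finset.range n,
        (((m : ℝ) + l) ^ (1 - p) - ((m : ℝ) + (l + 1 : ℕ)) ^ (1 - p)) := by
        apply Finset.sum_le_sum
        intro l _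
        have ha : (0 : ℝ) < (m : ℝ) + l := by positivity
        have := step_bound hp ha
        push_cast
        convert this using 3
        · rfl
        · ring
    _ = ((m : ℝ) + (0 : ℕ)) ^ (1 - p) - ((m : ℝ) + n) ^ (1 - p) := by
        rw [Finset.sum_range_sub' (fun l => ((m : ℝ) + l) ^ (1 - p)) n]
    _ ≤ (m : ℝ) ^ (1 - p) := by
        push_cast
        have : (0:ℝ) ≤ ((m : ℝ) + n) ^ (1 - p) := Real.rpow_nonneg (by positivity) _
        simp only [add_zero]
        linarith


lemma alg {L Q g : ℝ} (hL : 1 ≤ L) (hQ : 0 < Q) (hg : 0 < g) (hg1 : g < 1) :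
    (Q * L + 1) + Q * L * (g / (1 - g)) ≤ (1 + Q) / (1 - g) * L := by
  have h1g : (0:ℝ) < 1 - g := by linarith
  rw [div_mul_eq_mul_div, le_div_iff₀ h1g]
  have key : Q * L * (g / (1 - g)) * (1 - g) = Q * L * g := by
    field_simp
  nlinarith [key, hL, hQ, mul_pos hQ (lt_of_lt_of_le one_pos hL)]


theorem stmt1 (μ : ℕ → ℝ) (hnonneg : ∀ l, 0 ≤ μ l) (hmono : Antitone μ)
    (q γ : ℝ) (hq : 0 < q) (hγ : γ ∈ Set.Ioo (0 : ℝ) 1)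
    (hdecay : ∀ l : ℕ, μ l ≤ q * ((l : ℝ) + 1) ^ (-(1 / γ))) :
    ∀ lam : ℝ, 0 < lam →
      ∑' l, μ l / (μ l + lam) ≤ max ((1 + q ^ γ) / (1 - γ)) (q / (1 - γ)) * lam ^ (-γ) := by
  obtain ⟨hγ0, hγ1⟩ := hγ
  set p : ℝ := 1 / γ with hpdef
  have hp : 1 < p := (one_lt_div hγ0).2 (by linarith)
  have hp1 : (0 : ℝ) < p - 1 := by linarith
  have h1γ : (0 : ℝ) < 1 - γ := by linarith
  have hpg : 1 / (p - 1) = γ / (1 - γ) := by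
    rw [hpdef]; field_simp
  have Sg : Summable (fun l : ℕ => ((l : ℝ) + 1) ^ (-p)) := by
    have h0 : Summable (fun n : ℕ => (n : ℝ) ^ (-p)) :=
      Real.summable_nat_rpow.2 (by linarith)
    have := (summable_nat_add_iff 1).2 h0
    refine this.congr fun l => ?_
    push_cast; ring_nf
  have hμsum : Summable μ :=
    Summable.of_nonneg_of_le hnonneg (fun l => hdecay l) (Sg.mul_left q)
  intro lam hlam
  have hterm_nonneg : ∀ l, 0 ≤ μ l / (μ l + lam) :=
    fun l => div_nonneg (hnonneg l) (by linarith [hnonneg l])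
  have hterm_le1 : ∀ l, μ l / (μ l + lam) ≤ 1 := fun l =>
    (div_le_one (by linarith [hnonneg l])).2 (by linarith)
  have hterm_le : ∀ l, μ l / (μ l + lam) ≤ μ l / lam := fun l => by
    gcongr
    · exact hnonneg l
    · linarith [hnonneg l]
  have hf_sum : Summable (fun l => μ l / (μ l + lam)) :=
    Summable.of_nonneg_of_le hterm_nonneg hterm_le (hμsum.div_const lam)
  have hlamγ : (0 : ℝ) < lam ^ (-γ) := Real.rpow_pos_of_pos hlam _
  rcases le_or_gt 1 lam with hl1 | hl1
  · -- case lam ≥ 1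
    have h1 : ∑' l, μ l / (μ l + lam) ≤ (∑' l, μ l) / lam := by
      rw [← tsum_div_const]
      exact Summable.tsum_le_tsum hterm_le hf_sum (hμsum.div_const lam)
    have h2 : ∑' l, μ l ≤ q * (1 / (1 - γ)) := by
      have h3 : ∑' l, μ l ≤ ∑' l : ℕ, q * ((l : ℝ) + 1) ^ (-p) :=
        Summable.tsum_le_tsum hdecay hμsum (Sg.mul_left q)
      rw [tsum_mul_left] at h3
      have h4 : ∑' l : ℕ, ((l : ℝ) + 1) ^ (-p) ≤ 1 / (1 - γ) := by
        rw [Summable.tsum_eq_zero_add Sg]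
        have h5 : ∑' l : ℕ, (((l + 1 : ℕ) : ℝ) + 1) ^ (-p)
            ≤ ((1 : ℕ) : ℝ) ^ (1 - p) / (p - 1) := by
          refine le_trans (le_of_eq ?_) (tail_bound hp 1 le_rfl)
          congr 1; ext l; push_cast; ring_nf
        push_cast at h5 ⊢
        rw [Real.one_rpow] at h5
        have he0 : (0:ℝ) + 1 = 1 := by norm_num
        rw [he0, Real.one_rpow]
        have hkey : 1 + γ / (1 - γ) = 1 / (1 - γ) := by field_simp; ring
        rw [hpg] at h5
        linarith
      calc ∑' l, μ l ≤ q * ∑' l : ℕ, ((l : ℝ) + 1) ^ (-p) := h3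
        _ ≤ q * (1 / (1 - γ)) := by gcongr
    have h7 : (1:ℝ)/lam ≤ lam ^ (-γ) := by
      rw [one_div, ← Real.rpow_neg_one lam]
      exact Real.rpow_le_rpow_of_exponent_le hl1 (by linarith)
    calc ∑' l, μ l / (μ l + lam) ≤ (∑' l, μ l) / lam := h1
      _ ≤ (q * (1 / (1 - γ))) / lam := by gcongr
      _ = (q / (1 - γ)) * (1 / lam) := by ring
      _ ≤ (q / (1 - γ)) * lam ^ (-γ) :=
          mul_le_mul_of_nonneg_left h7 (div_nonneg hq.le h1γ.le)
      _ ≤ max ((1 + q ^ γ) / (1 - γ)) (q / (1 - γ)) * lam ^ (-γ) := by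
          gcongr; exact le_max_right _ _
  · -- case lam < 1
    set A : ℝ := (q / lam) ^ γ with hA
    have hb : (0:ℝ) < q / lam := div_pos hq hlam
    have hA0 : 0 < A := Real.rpow_pos_of_pos hb _
    obtain ⟨K, hK1, hKA, hKA'⟩ : ∃ K : ℕ, 1 ≤ K ∧ A ≤ K ∧ (K : ℝ) ≤ A + 1 := by
      refine ⟨⌈A⌉₊, ?_, Nat.le_ceil A, ?_⟩
      · exact Nat.one_le_iff_ne_zero.2 (by
          simp only [ne_eq, Nat.ceil_eq_zero, not_le]; exact hA0)
      · have := Nat.ceil_lt_add_one hA0.le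
        linarith
    have hsplit := Summable.sum_add_tsum_nat_add (f := fun l => μ l / (μ l + lam)) K hf_sum
    rw [← hsplit]
    have hhead : ∑ l ∈ Finset.range K, μ l / (μ l + lam) ≤ (K : ℝ) := by
      calc ∑ l ∈ Finset.range K, μ l / (μ l + lam) ≤ ∑ l ∈ Finset.range K, (1:ℝ) :=
            Finset.sum_le_sum (fun l _ => hterm_le1 l)
        _ = K := by simp
    have Sg2 : Summable (fun l : ℕ => ((K : ℝ) + l + 1) ^ (-p)) := by
      have := (summable_nat_add_iff K).2 Sg
      refine this.congr fun l => ?_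
      push_cast; ring_nf
    have htail : ∑' l : ℕ, μ (l + K) / (μ (l + K) + lam)
        ≤ (q / lam) * ((K : ℝ) ^ (1 - p) / (p - 1)) := by
      have hstep : ∀ l : ℕ, μ (l + K) / (μ (l + K) + lam)
          ≤ (q / lam) * ((K : ℝ) + l + 1) ^ (-p) := by
        intro l
        have harg : ((l + K : ℕ) : ℝ) + 1 = (K : ℝ) + l + 1 := by push_cast; ring
        calc μ (l + K) / (μ (l + K) + lam) ≤ μ (l + K) / lam := hterm_le _
          _ ≤ (q * ((K : ℝ) + l + 1) ^ (-p)) / lam := by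
              have h := hdecay (l + K)
              rw [harg] at h
              exact div_le_div_of_nonneg_right h hlam.le
          _ = (q / lam) * ((K : ℝ) + l + 1) ^ (-p) := by ring
      calc ∑' l : ℕ, μ (l + K) / (μ (l + K) + lam)
          ≤ ∑' l : ℕ, (q / lam) * ((K : ℝ) + l + 1) ^ (-p) :=
            Summable.tsum_le_tsum hstep ((summable_nat_add_iff K).2 hf_sum) (Sg2.mul_left _)
        _ = (q / lam) * ∑' l : ℕ, ((K : ℝ) + l + 1) ^ (-p) := tsum_mul_left
        _ ≤ (q / lam) * ((K : ℝ) ^ (1 - p) / (p - 1)) :=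
            mul_le_mul_of_nonneg_left (tail_bound hp K hK1) hb.le
    have hK1p : (K : ℝ) ^ (1 - p) ≤ A ^ (1 - p) :=
      Real.rpow_le_rpow_of_nonpos hA0 hKA (by linarith)
    have hAmul : (q / lam) * A ^ (1 - p) = A := by
      rw [hA]
      calc (q / lam) * ((q / lam) ^ γ) ^ (1 - p)
          = (q / lam) ^ (1:ℝ) * (q / lam) ^ (γ * (1 - p)) := by
            rw [Real.rpow_one, ← Real.rpow_mul hb.le]
        _ = (q / lam) ^ (1 + γ * (1 - p)) := (Real.rpow_add hb _ _).symm
        _ = (q / lam) ^ γ := by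
            congr 1
            rw [hpdef]; field_simp; ring
    have hAe : A = q ^ γ * lam ^ (-γ) := by
      rw [hA, Real.div_rpow hq.le hlam.le, Real.rpow_neg hlam.le, div_eq_mul_inv]
    have h1lam : 1 ≤ lam ^ (-γ) :=
      Real.one_le_rpow_of_pos_of_le_one_of_nonpos hlam hl1.le (by linarith)
    have hqγ : (0:ℝ) < q ^ γ := Real.rpow_pos_of_pos hq γ
    calc ∑ l ∈ Finset.range K, μ l / (μ l + lam)
          + ∑' l : ℕ, μ (l + K) / (μ (l + K) + lam)
        ≤ (A + 1) + (q / lam) * ((K : ℝ) ^ (1 - p) / (p - 1)) :=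
          add_le_add (hhead.trans hKA') htail
      _ ≤ (A + 1) + (q / lam) * (A ^ (1 - p) / (p - 1)) := by
          have := div_le_div_of_nonneg_right hK1p hp1.le
          exact add_le_add_right (mul_le_mul_of_nonneg_left this hb.le) _
      _ = (A + 1) + ((q / lam) * A ^ (1 - p)) * (1 / (p - 1)) := by ring
      _ = (A + 1) + A * (1 / (p - 1)) := by rw [hAmul]
      _ = (A + 1) + A * (γ / (1 - γ)) := by rw [hpg]
      _ ≤ (1 + q ^ γ) / (1 - γ) * lam ^ (-γ) := by
          rw [hAe]
          exact alg h1lam hqγ hγ0 hγ1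
      _ ≤ max ((1 + q ^ γ) / (1 - γ)) (q / (1 - γ)) * lam ^ (-γ) := by
          gcongr; exact le_max_left _ _
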